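/- For every n ≥ 1, the Eulerian-Catalan number EC(n) := A(n,2n+1)/(n+1) satisfies EC(n) = 2·A(n,2n), where A(m,N) is the number of permutations of [N] with m descents. In particular (n+1) divides A(n,2n+1). -/

import Mathlib

open scoped Classical

/-- Number of descents of `w` occurring among the first `ℓ` positions
(0-indexed: position `i` is a descent if `w i > w (i+1)`). -/
noncomputable def descentsIn {N : ℕ} (w : Equiv.Perm (Fin N)) (ℓ : ℕ) : ℕ :=
  ((Finset.range ℓ).filter (fun i =>
    ∃ h : i + 1 < N, w ⟨i + 1, h⟩ < w ⟨i, Nat.lt_of_succ_lt h⟩)).card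

/-- Total number of descents of a permutation of `[N]`. -/
noncomputable def descents {N : ℕ} (w : Equiv.Perm (Fin N)) : ℕ :=
  descentsIn w (N - 1)

/-- The Eulerian number `A(m, N)`: the number of permutations of `[N]`
with exactly `m` descents. -/
noncomputable def eulerian (m N : ℕ) : ℕ :=
  (Finset.univ.filter (fun w : Equiv.Perm (Fin N) => descents w = m)).card

namespace EulerianAux

variable {N : ℕ}

/-- The descent set of a permutation, as a finset of naturals. -/
noncomputable def dset (w : Equiv.Perm (Fin N)) : Finset ℕ :=
  ((Finset.range (N - 1)).filter (fun i =>
    ∃ h : i + 1 < N, w ⟨i + 1, h⟩ < w ⟨i, Nat.lt_of_succ_lt h⟩))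

lemma descents_eq (w : Equiv.Perm (Fin N)) : descents w = (dset w).card := rfl

lemma mem_dset {w : Equiv.Perm (Fin N)} {i : ℕ} (hi : i + 1 < N) :
    i ∈ dset w ↔ w ⟨i + 1, hi⟩ < w ⟨i, Nat.lt_of_succ_lt hi⟩ := by
  simp only [dset, Finset.mem_filter, Finset.mem_range]
  constructor
  · rintro ⟨-, _, hlt⟩
    exact hlt
  · intro h
    exact ⟨by omega, hi, h⟩

lemma mem_dset' {w : Equiv.Perm (Fin N)} {i : ℕ} (h : i ∈ dset w) : i + 1 < N := by
  simp only [dset, Finset.mem_filter, Finset.mem_range] at h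
  omega

lemma card_dset_le (w : Equiv.Perm (Fin N)) : (dset w).card ≤ N - 1 := by
  calc (dset w).card ≤ (Finset.range (N - 1)).card := Finset.card_filter_le _ _
    _ = N - 1 := Finset.card_range _

/-- Insert the maximal value `N` at position `k` into the word of `v`. -/
noncomputable def ins (v : Equiv.Perm (Fin N)) (k : Fin (N + 1)) : Equiv.Perm (Fin (N + 1)) :=
  (finSuccEquiv' k).trans ((v.optionCongr).trans finSuccEquivLast.symm)

lemma ins_apply_self (v : Equiv.Perm (Fin N)) (k : Fin (N + 1)) :
    ins v k k = Fin.last N := by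
  simp [ins, finSuccEquiv'_at]

lemma ins_apply_succAbove (v : Equiv.Perm (Fin N)) (k : Fin (N + 1)) (j : Fin N) :
    ins v k (k.succAbove j) = (v j).castSucc := by
  simp [ins, finSuccEquiv'_succAbove, finSuccEquivLast_symm_some]

lemma ins_apply_lt (v : Equiv.Perm (Fin N)) (k : Fin (N + 1)) {i : ℕ}
    (hiN : i < N) (h : i < N + 1) (hik : i < k.val) :
    ins v k ⟨i, h⟩ = (v ⟨i, hiN⟩).castSucc := by
  have hsa : (⟨i, h⟩ : Fin (N + 1)) = k.succAbove ⟨i, hiN⟩ := by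
    rw [Fin.succAbove_of_castSucc_lt]
    · rfl
    · rw [Fin.lt_def]
      simpa using hik
  rw [hsa, ins_apply_succAbove]

lemma ins_apply_eq (v : Equiv.Perm (Fin N)) (k : Fin (N + 1)) {i : ℕ}
    (h : i < N + 1) (hik : i = k.val) :
    ins v k ⟨i, h⟩ = Fin.last N := by
  have : (⟨i, h⟩ : Fin (N + 1)) = k := by
    ext; simpa using hik
  rw [this, ins_apply_self]

lemma ins_apply_gt (v : Equiv.Perm (Fin N)) (k : Fin (N + 1)) {i : ℕ}
    (hiN : i - 1 < N) (h : i < N + 1) (hik : k.val < i) :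
    ins v k ⟨i, h⟩ = (v ⟨i - 1, hiN⟩).castSucc := by
  have hsa : (⟨i, h⟩ : Fin (N + 1)) = k.succAbove ⟨i - 1, hiN⟩ := by
    rw [Fin.succAbove_of_le_castSucc]
    · ext; simp [Fin.val_succ]; omega
    · rw [Fin.le_def]; simpa using by omega
  rw [hsa, ins_apply_succAbove]

lemma mem_dset_ins_iff (v : Equiv.Perm (Fin N)) (k : Fin (N + 1)) {i : ℕ} (hi : i < N) :
    i ∈ dset (ins v k) ↔
      (i = k.val ∨ (i + 1 < k.val ∧ i ∈ dset v) ∨ (k.val < i ∧ i - 1 ∈ dset v)) := by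
  have hk : k.val < N + 1 := k.isLt
  rw [mem_dset (show i + 1 < N + 1 by omega)]
  rcases Nat.lt_trichotomy i k.val with hlt | heq | hgt
  · rcases Nat.lt_trichotomy (i + 1) k.val with h1 | h1 | h1
    · -- i + 1 < k
      rw [ins_apply_lt v k (show i + 1 < N by omega) _ h1,
        ins_apply_lt v k (show i < N by omega) _ hlt,
        Fin.castSucc_lt_castSucc_iff, ← mem_dset (show i + 1 < N by omega)]
      constructor
      · intro hm
        exact Or.inr (Or.inl ⟨h1, hm⟩)
      · rintro (h' | ⟨-, h'⟩ | ⟨h', -⟩)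
        · omega
        · exact h'
        · omega
    · -- i + 1 = k
      rw [ins_apply_eq v k _ h1, ins_apply_lt v k (show i < N by omega) _ hlt]
      constructor
      · intro hc
        exact absurd hc (Fin.castSucc_lt_last _).asymm
      · rintro (h' | ⟨h', -⟩ | ⟨h', -⟩) <;> omega
    · omega
  · -- i = k
    rw [ins_apply_eq v k _ heq, ins_apply_gt v k (show i + 1 - 1 < N by omega) _ (by omega)]
    simp only [Fin.castSucc_lt_last, true_iff]
    exact Or.inl heq
  · -- k < i
    rw [ins_apply_gt v k (show i + 1 - 1 < N by omega) _ (by omega),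
      ins_apply_gt v k (show i - 1 < N by omega) _ hgt,
      Fin.castSucc_lt_castSucc_iff]
    have hmd := mem_dset (w := v) (i := i - 1) (show i - 1 + 1 < N by omega)
    have hmk : (⟨i - 1 + 1, show i - 1 + 1 < N by omega⟩ : Fin N) = ⟨i + 1 - 1, show i + 1 - 1 < N by omega⟩ := by
      ext; simp; omega
    rw [hmk] at hmd
    rw [← hmd]
    constructor
    · intro hm
      exact Or.inr (Or.inr ⟨hgt, hm⟩)
    · rintro (h' | ⟨h', -⟩ | ⟨-, h'⟩)
      · omega
      · omega
      · exact h'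

lemma dset_ins (v : Equiv.Perm (Fin N)) (k : Fin (N + 1)) :
    dset (ins v k) =
      ((dset v).filter (fun j => j + 1 ≠ k.val)).image
          (fun j => if j + 1 ≤ k.val then j else j + 1)
        ∪ (Finset.range N).filter (fun i => i = k.val) := by
  ext i
  simp only [Finset.mem_union, Finset.mem_image, Finset.mem_filter, Finset.mem_range]
  by_cases hi : i < N
  · rw [mem_dset_ins_iff v k hi]
    constructor
    · rintro (h | ⟨h1, h2⟩ | ⟨h1, h2⟩)
      · exact Or.inr ⟨hi, h⟩
      · exact Or.inl ⟨i, ⟨h2, by omega⟩, by simp [show i + 1 ≤ k.val by omega]⟩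
      · refine Or.inl ⟨i - 1, ⟨h2, by omega⟩, ?_⟩
        rw [if_neg (by omega)]
        omega
    · rintro (⟨j, ⟨hj, hjk⟩, hfj⟩ | ⟨-, h⟩)
      · by_cases hb : j + 1 ≤ k.val
        · rw [if_pos hb] at hfj
          subst hfj
          exact Or.inr (Or.inl ⟨by omega, hj⟩)
        · rw [if_neg hb] at hfj
          subst hfj
          exact Or.inr (Or.inr ⟨by omega, by simpa using hj⟩)
      · exact Or.inl h
  · constructor
    · intro h
      have := mem_dset' h
      omega
    · rintro (⟨j, ⟨hj, -⟩, hfj⟩ | ⟨h, -⟩)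
      · have := mem_dset' hj
        exfalso
        by_cases hb : j + 1 ≤ k.val <;> simp [hb] at hfj <;> omega
      · omega

lemma card_dset_ins (v : Equiv.Perm (Fin N)) (k : Fin (N + 1)) :
    (dset (ins v k)).card =
      ((dset v).filter (fun j => j + 1 ≠ k.val)).card + (if k.val < N then 1 else 0) := by
  rw [dset_ins, Finset.card_union_of_disjoint, Finset.card_image_of_injOn]
  · congr 1
    have : (Finset.range N).filter (fun i => i = k.val) =
        if k.val < N then {k.val} else ∅ := by
      split
      · next h =>
        ext x
        simp only [Finset.mem_filter, Finset.mem_range, Finset.mem_singleton]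
        omega
      · next h =>
        ext x
        simp only [Finset.mem_filter, Finset.mem_range, Finset.notMem_empty, iff_false,
          not_and]
        omega
    rw [this]
    split <;> simp
  · intro a ha b hb hab
    simp only [Finset.coe_filter, Set.mem_setOf_eq] at ha hb
    dsimp only at hab
    split_ifs at hab <;> omega
  · rw [Finset.disjoint_left]
    rintro x hx hx2
    simp only [Finset.mem_image, Finset.mem_filter] at hx hx2
    obtain ⟨j, ⟨-, hj⟩, hfj⟩ := hx
    split_ifs at hfj <;> omega

/-- The insertion position `k` keeps the number of descents unchanged. -/
def keeps (v : Equiv.Perm (Fin N)) (k : Fin (N + 1)) : Prop :=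
  k.val = N ∨ (0 < k.val ∧ k.val - 1 ∈ dset v)

lemma descents_ins (v : Equiv.Perm (Fin N)) (k : Fin (N + 1)) :
    descents (ins v k) = if keeps v k then descents v else descents v + 1 := by
  have hk : k.val < N + 1 := k.isLt
  rw [descents_eq, descents_eq, card_dset_ins]
  unfold keeps
  by_cases h1 : k.val = N
  · rw [Finset.filter_true_of_mem (p := fun j => j + 1 ≠ k.val)
      (fun j hj => by have := mem_dset' hj; omega)]
    rw [if_neg (show ¬ k.val < N by omega), if_pos (Or.inl h1 : k.val = N ∨ _)]
    omega
  · have hkN : k.val < N := by omega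
    by_cases h2 : 0 < k.val ∧ k.val - 1 ∈ dset v
    · have herase : (dset v).filter (fun j => j + 1 ≠ k.val) = (dset v).erase (k.val - 1) := by
        ext j
        simp only [Finset.mem_filter, Finset.mem_erase]
        constructor
        · rintro ⟨hj, hj2⟩
          exact ⟨by omega, hj⟩
        · rintro ⟨hj2, hj⟩
          exact ⟨hj, by omega⟩
      rw [herase, Finset.card_erase_of_mem h2.2]
      have hpos : 0 < (dset v).card := Finset.card_pos.mpr ⟨_, h2.2⟩
      rw [if_pos hkN, if_pos (Or.inr h2 : k.val = N ∨ _)]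
      omega
    · rw [Finset.filter_true_of_mem (p := fun j => j + 1 ≠ k.val)
        (fun j hj hc => h2 ⟨by omega, by rwa [show k.val - 1 = j by omega]⟩)]
      rw [if_pos hkN, if_neg (fun hc => hc.elim (fun h => h1 h) h2 :
        ¬ (k.val = N ∨ (0 < k.val ∧ k.val - 1 ∈ dset v)))]

lemma card_keeps (v : Equiv.Perm (Fin N)) :
    ((Finset.univ : Finset (Fin (N + 1))).filter (fun k => keeps v k)).card
      = descents v + 1 := by
  rw [descents_eq]
  have h1 : ((Finset.univ : Finset (Fin (N + 1))).filter (fun k => keeps v k)).card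
      = ((Finset.range (N + 1)).filter
          (fun x => x = N ∨ (0 < x ∧ x - 1 ∈ dset v))).card := by
    apply Finset.card_bij (fun k _ => k.val)
    · intro k hk
      simp only [Finset.mem_filter, Finset.mem_univ, true_and] at hk
      simp only [Finset.mem_filter, Finset.mem_range]
      exact ⟨k.isLt, hk⟩
    · intro a _ b _ h
      exact Fin.val_injective h
    · intro x hx
      simp only [Finset.mem_filter, Finset.mem_range] at hx
      exact ⟨⟨x, hx.1⟩, by simp [keeps]; exact hx.2, rfl⟩
  rw [h1]
  have h2 : (Finset.range (N + 1)).filter (fun x => x = N ∨ (0 < x ∧ x - 1 ∈ dset v))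
      = insert N ((dset v).image (· + 1)) := by
    ext x
    simp only [Finset.mem_filter, Finset.mem_range, Finset.mem_insert, Finset.mem_image]
    constructor
    · rintro ⟨hx, h | ⟨h0, hm⟩⟩
      · exact Or.inl h
      · exact Or.inr ⟨x - 1, hm, by omega⟩
    · rintro (h | ⟨j, hj, hjx⟩)
      · exact ⟨by omega, Or.inl h⟩
      · have := mem_dset' hj
        exact ⟨by omega, Or.inr ⟨by omega, by rwa [show x - 1 = j by omega]⟩⟩
  rw [h2, Finset.card_insert_of_notMem, Finset.card_image_of_injective _
    (add_left_injective 1)]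
  intro hc
  simp only [Finset.mem_image] at hc
  obtain ⟨j, hj, hjN⟩ := hc
  have := mem_dset' hj
  omega

lemma count_k (v : Equiv.Perm (Fin N)) (m : ℕ) :
    ((Finset.univ : Finset (Fin (N + 1))).filter
        (fun k => descents (ins v k) = m)).card =
      if descents v = m then m + 1
      else if descents v + 1 = m then N - descents v else 0 := by
  have hle : descents v ≤ N - 1 := by rw [descents_eq]; exact card_dset_le v
  by_cases h : descents v = m
  · rw [if_pos h]
    have hfeq : (Finset.univ : Finset (Fin (N + 1))).filter
          (fun k => descents (ins v k) = m)
        = (Finset.univ : Finset (Fin (N + 1))).filter (fun k => keeps v k) := by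
      apply Finset.filter_congr
      intro k _
      rw [descents_ins]
      by_cases hP : keeps v k
      · simp [hP, h]
      · simp only [if_neg hP]
        constructor
        · intro hc; omega
        · intro hc; exact absurd hc hP
    rw [hfeq, card_keeps, h]
  · by_cases h2 : descents v + 1 = m
    · rw [if_neg h, if_pos h2]
      have hfeq : (Finset.univ : Finset (Fin (N + 1))).filter
            (fun k => descents (ins v k) = m)
          = (Finset.univ : Finset (Fin (N + 1))).filter (fun k => ¬ keeps v k) := by
        apply Finset.filter_congr
        intro k _
        rw [descents_ins]
        by_cases hP : keeps v k
        · simp only [if_pos hP]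
          constructor
          · intro hc; omega
          · intro hc; exact absurd hP hc
        · simp [hP, h2]
      have hsum := Finset.card_filter_add_card_filter_not
        (s := (Finset.univ : Finset (Fin (N + 1)))) (p := fun k => keeps v k)
      rw [Finset.card_univ, Fintype.card_fin] at hsum
      rw [hfeq]
      have hck := card_keeps v
      have : ((Finset.univ : Finset (Fin (N + 1))).filter (fun k => ¬ keeps v k)).card
          = N + 1 - (descents v + 1) := by omega
      rw [this]
      omega
    · rw [if_neg h, if_neg h2]
      rw [Finset.card_eq_zero, Finset.filter_eq_empty_iff]
      intro k _
      rw [descents_ins]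
      split <;> omega

/-- Insertion as an equivalence. -/
noncomputable def insEquiv : Equiv.Perm (Fin N) × Fin (N + 1) ≃ Equiv.Perm (Fin (N + 1)) where
  toFun p := ins p.1 p.2
  invFun w := (Equiv.removeNone
      ((finSuccEquiv' (w.symm (Fin.last N))).symm.trans (w.trans finSuccEquivLast)),
    w.symm (Fin.last N))
  left_inv := by
    rintro ⟨v, k⟩
    have hk : (ins v k).symm (Fin.last N) = k := by
      rw [Equiv.symm_apply_eq]
      exact (ins_apply_self v k).symm
    simp only [hk]
    have hcomp : (finSuccEquiv' k).symm.trans ((ins v k).trans finSuccEquivLast)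
        = v.optionCongr := by
      ext x
      simp [ins, Equiv.trans_apply]
    rw [hcomp, Equiv.removeNone_optionCongr]
  right_inv := by
    intro w
    set k := w.symm (Fin.last N) with hkdef
    set e := (finSuccEquiv' k).symm.trans (w.trans finSuccEquivLast) with hedef
    have hnone : e none = none := by
      simp [hedef, finSuccEquiv'_symm_none, hkdef, Equiv.apply_symm_apply, finSuccEquivLast_last]
    have hcongr : (Equiv.removeNone e).optionCongr = e := by
      apply Equiv.ext
      intro x
      cases x with
      | none =>
        rw [Equiv.optionCongr_apply, Option.map_none, hnone]
      | some a =>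
        rcases hx : e (some a) with _ | b
        · exact absurd (e.injective (hx.trans hnone.symm)) (Option.some_ne_none a)
        · have h := Equiv.removeNone_some e ⟨b, hx⟩
          rw [Equiv.optionCongr_apply, Option.map_some, h, hx]
    show ins _ k = w
    rw [ins, hcongr, hedef]
    ext x
    simp [Equiv.trans_apply]

lemma eulerian_succ_eq_sum (m : ℕ) :
    eulerian m (N + 1) = ∑ v : Equiv.Perm (Fin N),
      ((Finset.univ.filter (fun k : Fin (N + 1) => descents (ins v k) = m))).card := by
  rw [eulerian]
  have h1 : (Finset.univ.filter (fun w : Equiv.Perm (Fin (N + 1)) => descents w = m)).card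
      = (Finset.univ.filter
          (fun p : Equiv.Perm (Fin N) × Fin (N + 1) => descents (ins p.1 p.2) = m)).card := by
    refine (Finset.card_bij (fun p _ => (insEquiv : _ ≃ _) p) ?_ ?_ ?_).symm
    · intro p hp
      simp only [Finset.mem_filter, Finset.mem_univ, true_and] at hp ⊢
      exact hp
    · intro a _ b _ h
      exact insEquiv.injective h
    · intro w hw
      refine ⟨insEquiv.symm w, ?_, insEquiv.apply_symm_apply w⟩
      simp only [Finset.mem_filter, Finset.mem_univ, true_and] at hw ⊢
      rw [show ins (insEquiv.symm w).1 (insEquiv.symm w).2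
          = insEquiv (insEquiv.symm w) from rfl, insEquiv.apply_symm_apply]
      exact hw
  rw [h1, Finset.card_filter, Fintype.sum_prod_type]
  apply Finset.sum_congr rfl
  intro v _
  rw [Finset.card_filter]

lemma recurrence (N m : ℕ) (hm : 0 < m) :
    eulerian m (N + 1) = (m + 1) * eulerian m N + (N + 1 - m) * eulerian (m - 1) N := by
  rw [eulerian_succ_eq_sum]
  have hstep : ∀ v : Equiv.Perm (Fin N),
      ((Finset.univ.filter (fun k : Fin (N + 1) => descents (ins v k) = m))).card
        = (if descents v = m then m + 1 else 0)
          + (if descents v = m - 1 then N + 1 - m else 0) := by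
    intro v
    have hle : descents v ≤ N - 1 := by rw [descents_eq]; exact card_dset_le v
    rw [count_k]
    split_ifs <;> omega
  rw [Finset.sum_congr rfl (fun v _ => hstep v), Finset.sum_add_distrib,
    ← Finset.sum_filter, ← Finset.sum_filter, Finset.sum_const, Finset.sum_const,
    smul_eq_mul, smul_eq_mul, eulerian, eulerian]
  ring

/-- Reverse the positions of a permutation word. -/
noncomputable def conjRev (w : Equiv.Perm (Fin N)) : Equiv.Perm (Fin N) :=
  Fin.revPerm.trans w

lemma conjRev_apply (w : Equiv.Perm (Fin N)) (i : Fin N) :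
    conjRev w i = w i.rev := rfl

lemma conjRev_conjRev (w : Equiv.Perm (Fin N)) : conjRev (conjRev w) = w := by
  ext i
  simp [conjRev_apply, Fin.rev_rev]

lemma dset_conjRev (w : Equiv.Perm (Fin N)) :
    dset (conjRev w) = (Finset.range (N - 1)).filter (fun i => ¬ (N - 2 - i) ∈ dset w) := by
  ext i
  by_cases hi : i + 1 < N
  · have h2 : (N - 2 - i) + 1 < N := by omega
    rw [mem_dset hi]
    simp only [Finset.mem_filter, Finset.mem_range, mem_dset h2]
    have hrev1 : (⟨i + 1, hi⟩ : Fin N).rev = ⟨N - 2 - i, by omega⟩ := by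
      ext
      simp [Fin.val_rev]
      omega
    have hrev0 : (⟨i, Nat.lt_of_succ_lt hi⟩ : Fin N).rev
        = ⟨(N - 2 - i) + 1, h2⟩ := by
      ext
      simp [Fin.val_rev]
      omega
    rw [conjRev_apply, conjRev_apply, hrev1, hrev0]
    have hne : w ⟨(N - 2 - i) + 1, h2⟩ ≠ w ⟨N - 2 - i, Nat.lt_of_succ_lt h2⟩ := by
      intro hc
      have := w.injective hc
      rw [Fin.mk.injEq] at this
      omega
    constructor
    · intro hlt
      exact ⟨by omega, fun hc => absurd (hc.trans hlt) (lt_irrefl _)⟩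
    · rintro ⟨-, hc⟩
      rcases lt_or_gt_of_ne hne with h | h
      · exact absurd h hc
      · exact h
  · constructor
    · intro h
      exact absurd (mem_dset' h) hi
    · intro h
      simp only [Finset.mem_filter, Finset.mem_range] at h
      omega

lemma descents_conjRev (w : Equiv.Perm (Fin N)) :
    descents (conjRev w) = (N - 1) - descents w := by
  rw [descents_eq, descents_eq, dset_conjRev]
  have hbij : ((Finset.range (N - 1)).filter (fun i => ¬ (N - 2 - i) ∈ dset w)).card
      = ((Finset.range (N - 1)).filter (fun i => ¬ i ∈ dset w)).card := by
    apply Finset.card_bij (fun i _ => N - 2 - i)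
    · intro a ha
      simp only [Finset.mem_filter, Finset.mem_range] at ha ⊢
      exact ⟨by omega, ha.2⟩
    · intro a ha b hb h
      simp only [Finset.mem_filter, Finset.mem_range] at ha hb
      omega
    · intro b hb
      simp only [Finset.mem_filter, Finset.mem_range] at hb
      refine ⟨N - 2 - b, ?_, by omega⟩
      simp only [Finset.mem_filter, Finset.mem_range]
      rw [show N - 2 - (N - 2 - b) = b by omega]
      exact ⟨by omega, hb.2⟩
  rw [hbij]
  have hds : (Finset.range (N - 1)).filter (fun i => i ∈ dset w) = dset w := by
    ext i
    simp only [Finset.mem_filter, Finset.mem_range]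
    constructor
    · rintro ⟨-, h⟩
      exact h
    · intro h
      exact ⟨by have := mem_dset' h; omega, h⟩
  have hsum := Finset.card_filter_add_card_filter_not
    (s := Finset.range (N - 1)) (p := fun i => i ∈ dset w)
  rw [hds, Finset.card_range] at hsum
  omega

lemma eulerian_rev (m : ℕ) (hm : m ≤ N - 1) :
    eulerian (N - 1 - m) N = eulerian m N := by
  rw [eulerian, eulerian]
  apply Finset.card_bij (fun w _ => conjRev w)
  · intro w hw
    simp only [Finset.mem_filter, Finset.mem_univ, true_and] at hw ⊢
    rw [descents_conjRev, hw]
    omega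
  · intro a _ b _ h
    have := congrArg conjRev h
    rwa [conjRev_conjRev, conjRev_conjRev] at this
  · intro u hu
    simp only [Finset.mem_filter, Finset.mem_univ, true_and] at hu
    refine ⟨conjRev u, ?_, conjRev_conjRev u⟩
    simp only [Finset.mem_filter, Finset.mem_univ, true_and]
    rw [descents_conjRev, hu]

end EulerianAux

theorem eulerianCatalan_eq_two_mul (n : ℕ) (hn : 1 ≤ n) :
    (n + 1) ∣ eulerian n (2 * n + 1) ∧
      eulerian n (2 * n + 1) / (n + 1) = 2 * eulerian n (2 * n) := by
  have hrec := EulerianAux.recurrence (2 * n) n hn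
  have hsym : eulerian (n - 1) (2 * n) = eulerian n (2 * n) := by
    have h := EulerianAux.eulerian_rev (N := 2 * n) n (by omega)
    rwa [show 2 * n - 1 - n = n - 1 by omega] at h
  have h2 : eulerian n (2 * n + 1) = (n + 1) * (2 * eulerian n (2 * n)) := by
    rw [hrec, hsym, show 2 * n + 1 - n = n + 1 by omega]
    ring
  refine ⟨⟨2 * eulerian n (2 * n), h2⟩, ?_⟩
  rw [h2, Nat.mul_div_cancel_left _ (by omega : 0 < n + 1)]
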